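/- Let k, Δ, d ≥ 2 and let H be built by the 2-step method from the connected (d,Δ)-bipartite graph H0 using the [Δ,k]-transversal design T. Let Q and Q' be distinct blocks of H0 such that there are λ ≥ 1 pairwise internally-disjoint paths in H0 from Q to Q', each of length at most μ. Then for any block B_{Q,V} ∈ B_Q of H and any block B_{Q',V'} ∈ B_{Q'} of H there are min{Δ,k} pairwise internally-disjoint paths in H from B_{Q,V} to B_{Q',V'}, each of length at most μ + 4. -/

import Mathlib

/-- The bipartite graph on `ν ⊕ β` (nodes on the left, blocks on the right)
determined by the adjacency relation `adj`. -/
def bipGraph {ν β : Type} (adj : ν → β → Prop) : SimpleGraph (ν ⊕ β) :=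
  SimpleGraph.fromRel fun u v => ∃ x b, u = Sum.inl x ∧ v = Sum.inr b ∧ adj x b

/-- A `[Δ,k]`-transversal design: the nodes form a set of size `Δ * k` partitioned
into `Δ` groups (the fibres of `group`), each of size `k`; there are `k ^ 2` blocks;
every block is adjacent to exactly one node of each group; and every pair of nodes
lying in distinct groups is adjacent to exactly one common block (the block
*generated* by the pair). -/
structure IsTransversalDesign {ν β : Type} (Δ k : ℕ)
    (group : ν → Fin Δ) (adj : ν → β → Prop) : Prop where
  two_le_k : 2 ≤ k
  two_le_Δ : 2 ≤ Δ
  groupCard : ∀ i : Fin Δ, Nat.card {x : ν // group x = i} = k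
  blockCard : Nat.card β = k ^ 2
  blockMeets : ∀ (b : β) (i : Fin Δ), ∃! x : ν, group x = i ∧ adj x b
  pairGen : ∀ x y : ν, group x ≠ group y → ∃! b : β, adj x b ∧ adj y b

/-- A family of walks (with sources `s i` and destinations `t i`) is pairwise
internally-disjoint if every vertex which is a source or destination of some member
of the family appears on members of the family only as their source or destination,
and every vertex which is not a source or destination of any member of the family
lies on at most one member of the family. -/
def PairwiseInternallyDisjoint {V ι : Type} {G : SimpleGraph V} {s t : ι → V}
    (p : (i : ι) → G.Walk (s i) (t i)) : Prop :=
  (∀ i j : ι, ∀ v : V, v ∈ (p i).support → (v = s j ∨ v = t j) → v = s i ∨ v = t i) ∧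
  (∀ i j : ι, ∀ v : V, (∀ l : ι, v ≠ s l ∧ v ≠ t l) →
    v ∈ (p i).support → v ∈ (p j).support → i = j)

/-- A family of walks is pairwise edge-disjoint if every edge lies on at most one
member of the family. -/
def PairwiseEdgeDisjoint {V ι : Type} {G : SimpleGraph V} {s t : ι → V}
    (p : (i : ι) → G.Walk (s i) (t i)) : Prop :=
  ∀ i j : ι, ∀ e : Sym2 V, e ∈ (p i).edges → e ∈ (p j).edges → i = j

/-- A `(d,Δ)`-bipartite graph: every node has degree `d` and every block has
degree (rank) `Δ`. -/
def IsBipartiteDegRank {ν β : Type} (d Δ : ℕ) (adj : ν → β → Prop) : Prop :=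
  (∀ x : ν, Nat.card {b : β // adj x b} = d) ∧
  (∀ b : β, Nat.card {x : ν // adj x b} = Δ)

/-- The bipartite graph determined by `adj` has line-diameter `l`: the maximum,
over pairs of distinct blocks, of the distance between the two blocks is `l`. -/
def HasLineDiam {ν β : Type} (adj : ν → β → Prop) (l : ℕ) : Prop :=
  (∀ b b' : β, b ≠ b' → (bipGraph adj).dist (Sum.inr b) (Sum.inr b') ≤ l) ∧
  (∃ b b' : β, b ≠ b' ∧ (bipGraph adj).dist (Sum.inr b) (Sum.inr b') = l)

/-- `adjH` describes the bipartite graph `H` built by the 2-step method from the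
bipartite graph `H0` (given by `adj0`) and the `[Δ,k]`-transversal design `T`
(given by `groupT`, `adjT`): the nodes of `H` are the pairs `(p, j)` for `p` a node
of `H0` and `j : Fin k` (so the group `G_p` is `{p} × Fin k`), the blocks of `H`
are the pairs `(Q, b)` for `Q` a block of `H0` and `b` a block of `T` (so the set
`B_Q` is `{Q} × βT`, and such sets are automatically pairwise disjoint, as are the
edge sets of the copies `T_Q`), a node `(p, j)` is adjacent in `H` to a block
`(Q, b)` only if `p` is adjacent to `Q` in `H0`, and for every block `Q` of `H0`
the nodes of the groups `G_p`, for `p` a neighbour of `Q` in `H0`, together with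
the blocks of `B_Q` form a copy `T_Q` of `T` whose `Δ` groups are these groups. -/
structure TwoStep {ν0 β0 νT βT : Type} (Δ k : ℕ)
    (adj0 : ν0 → β0 → Prop) (groupT : νT → Fin Δ) (adjT : νT → βT → Prop)
    (adjH : ν0 × Fin k → β0 × βT → Prop) : Prop where
  td : IsTransversalDesign Δ k groupT adjT
  supp : ∀ (x : ν0 × Fin k) (Q : β0) (b : βT), adjH x (Q, b) → adj0 x.1 Q
  copy : ∀ Q : β0, ∃ (enum : Fin Δ → ν0) (f : νT ≃ {x : ν0 × Fin k // adj0 x.1 Q})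
      (g : βT ≃ βT),
    Function.Injective enum ∧ (∀ i : Fin Δ, adj0 (enum i) Q) ∧
    (∀ q : ν0, adj0 q Q → ∃ i : Fin Δ, enum i = q) ∧
    (∀ x : νT, ((f x : ν0 × Fin k).1 = enum (groupT x))) ∧
    (∀ (x : νT) (b : βT), adjT x b ↔ adjH (f x : ν0 × Fin k) (Q, g b))

section BipLemmas

variable {ν β : Type} {adj : ν → β → Prop}

lemma bip_adj_inl_inr {x : ν} {b : β} :
    (bipGraph adj).Adj (Sum.inl x) (Sum.inr b) ↔ adj x b := by
  simp [bipGraph, SimpleGraph.fromRel_adj]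

lemma bip_adj_inr_inl {x : ν} {b : β} :
    (bipGraph adj).Adj (Sum.inr b) (Sum.inl x) ↔ adj x b := by
  rw [SimpleGraph.adj_comm]; exact bip_adj_inl_inr

lemma bip_not_inl_inl {x y : ν} : ¬ (bipGraph adj).Adj (Sum.inl x) (Sum.inl y) := by
  simp [bipGraph, SimpleGraph.fromRel_adj]

lemma bip_not_inr_inr {x y : β} : ¬ (bipGraph adj).Adj (Sum.inr x) (Sum.inr y) := by
  simp [bipGraph, SimpleGraph.fromRel_adj]

end BipLemmas

section Comb

/-- An embedding of `Fin m` into `Fin k` with two prescribed values. -/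
lemma emb_two {m k : ℕ} (hmk : m ≤ k) (j1 j2 : Fin m) (v1 v2 : Fin k)
    (h12 : j1 = j2 → v1 = v2) (h12' : j1 ≠ j2 → v1 ≠ v2) :
    ∃ ℓ : Fin m ↪ Fin k, ℓ j1 = v1 ∧ ℓ j2 = v2 := by
  classical
  set ι : Fin m ↪ Fin k := Fin.castLEEmb hmk
  set g1 : Fin m ↪ Fin k := ι.trans (Equiv.swap (ι j1) v1).toEmbedding with hg1
  have hg1j1 : g1 j1 = v1 := by simp [hg1]
  by_cases h : j1 = j2
  · subst h
    exact ⟨g1, hg1j1, by rw [hg1j1, h12 rfl]⟩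
  · have hv : v1 ≠ v2 := h12' h
    refine ⟨g1.trans (Equiv.swap (g1 j2) v2).toEmbedding, ?_, by simp⟩
    have h1 : v1 ≠ g1 j2 := by
      intro he; exact h (g1.injective (hg1j1.trans he))
    simp only [Function.Embedding.trans_apply, Equiv.coe_toEmbedding, Function.comp_apply, hg1j1]
    exact Equiv.swap_apply_of_ne_of_ne h1 hv

/-- Glue an equivalence on `p`-parts and on complements into a permutation. -/
lemma glue_perm {n : ℕ} (p q : Fin n → Prop) [DecidablePred p] [DecidablePred q]
    (ep : {j // p j} ≃ {u // q u}) (en : {j // ¬ p j} ≃ {u // ¬ q u}) :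
    ∃ π : Equiv.Perm (Fin n),
      (∀ j (h : p j), π j = (ep ⟨j, h⟩ : Fin n)) ∧
      (∀ j (h : ¬ p j), π j = (en ⟨j, h⟩ : Fin n)) := by
  refine ⟨(Equiv.sumCompl p).symm.trans ((ep.sumCongr en).trans (Equiv.sumCompl q)), ?_, ?_⟩
  · intro j h
    have : (Equiv.sumCompl p).symm j = Sum.inl ⟨j, h⟩ := by
      rw [Equiv.symm_apply_eq, Equiv.sumCompl_apply_inl]
    simp [this]
  · intro j h
    have : (Equiv.sumCompl p).symm j = Sum.inr ⟨j, h⟩ := by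
      rw [Equiv.symm_apply_eq, Equiv.sumCompl_apply_inr]
    simp [this]

/-- A partial injection on `Fin n` extends to a permutation. -/
lemma extend_partial_inj {n : ℕ} (M : Fin n → Option (Fin n))
    (hM : ∀ j1 j2 u, M j1 = some u → M j2 = some u → j1 = j2) :
    ∃ ψ : Equiv.Perm (Fin n), ∀ j u, M j = some u → ψ j = u := by
  classical
  set p : Fin n → Prop := fun j => (M j).isSome with hp
  set q : Fin n → Prop := fun u => ∃ j, M j = some u with hq
  have hbij : Function.Bijective
      (fun j : {j // p j} => (⟨(M j.1).get j.2, ⟨j.1, Option.some_get j.2 |>.symm⟩⟩ : {u // q u})) := by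
    constructor
    · rintro ⟨j1, h1⟩ ⟨j2, h2⟩ hEq
      have h1' : M j1 = some ((M j1).get h1) := (Option.some_get h1).symm
      have h2' : M j2 = some ((M j2).get h2) := (Option.some_get h2).symm
      have : (M j1).get h1 = (M j2).get h2 := by simpa using hEq
      exact Subtype.ext (hM j1 j2 _ h1' (this ▸ h2'))
    · rintro ⟨u, j, hj⟩
      refine ⟨⟨j, by simp [hp, hj]⟩, ?_⟩
      apply Subtype.ext
      simp [hj]
  set ep : {j // p j} ≃ {u // q u} := Equiv.ofBijective _ hbij with hep
  have hcard : Fintype.card {j // ¬ p j} = Fintype.card {u // ¬ q u} := by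
    have h1 := Fintype.card_congr ep
    have h2 := Fintype.card_subtype_compl p
    have h3 := Fintype.card_subtype_compl q
    rw [h2, h3, h1]
  obtain ⟨π, hπ1, _⟩ := glue_perm p q ep (Fintype.equivOfCardEq hcard)
  refine ⟨π, fun j u hj => ?_⟩
  have hpj : p j := by simp [hp, hj]
  rw [hπ1 j hpj]
  show ((M j).get _ : Fin n) = u
  simp [hj]

end Comb

section Pairing

/-- Dichotomy for pairing the entry and exit structures. -/
lemma pairing_dichotomy {m : ℕ} {W C : Type} (E X : Fin m → W)
    (hE : Function.Injective E) (hX : Function.Injective X)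
    (col : W → C) (hcE : Function.Injective fun j => col (E j))
    (hcX : Function.Injective fun j => col (X j)) :
    (∃ π : Equiv.Perm (Fin m),
      (∀ j u, E j = X u → π j = u) ∧
      (∀ j, col (E j) = col (X (π j)) → E j = X (π j))) ∨
    (∃ j0 u0, col (E j0) = col (X u0) ∧ (∀ u, E j0 ≠ X u) ∧
      (∀ j, j ≠ j0 → ∃ u, u ≠ u0 ∧ E j = X u)) := by
  classical
  set Mo : Fin m → Option (Fin m) :=
    fun j => if h : ∃ u, E j = X u then some h.choose else none with hMo
  have hMoSpec : ∀ j u, Mo j = some u → E j = X u := by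
    intro j u hj
    simp only [hMo] at hj
    split at hj
    · rename_i h
      obtain rfl : h.choose = u := by simpa using hj
      exact h.choose_spec
    · exact absurd hj (by simp)
  have hMoAll : ∀ j u, E j = X u → Mo j = some u := by
    intro j u hju
    have h : ∃ u, E j = X u := ⟨u, hju⟩
    have : h.choose = u := hX (h.choose_spec.symm.trans hju)
    simp [hMo, dif_pos h, this]
  have hMoInj : ∀ j1 j2 u, Mo j1 = some u → Mo j2 = some u → j1 = j2 := by
    intro j1 j2 u h1 h2
    exact hE ((hMoSpec _ _ h1).trans (hMoSpec _ _ h2).symm)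
  set p : Fin m → Prop := fun j => (Mo j).isSome with hp
  set q : Fin m → Prop := fun u => ∃ j, Mo j = some u with hq
  have hbij : Function.Bijective
      (fun j : {j // p j} => (⟨(Mo j.1).get j.2, ⟨j.1, Option.some_get j.2 |>.symm⟩⟩ : {u // q u})) := by
    constructor
    · rintro ⟨j1, h1⟩ ⟨j2, h2⟩ hEq
      have h1' : Mo j1 = some ((Mo j1).get h1) := (Option.some_get h1).symm
      have h2' : Mo j2 = some ((Mo j2).get h2) := (Option.some_get h2).symm
      have : (Mo j1).get h1 = (Mo j2).get h2 := by simpa using hEq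
      exact Subtype.ext (hMoInj j1 j2 _ h1' (this ▸ h2'))
    · rintro ⟨u, j, hj⟩
      refine ⟨⟨j, by simp [hp, hj]⟩, ?_⟩
      apply Subtype.ext
      simp [hj]
  set ep : {j // p j} ≃ {u // q u} := Equiv.ofBijective _ hbij with hep
  have hepSpec : ∀ (j : {j // p j}), Mo j.1 = some (ep j : Fin m) := by
    rintro ⟨j, h⟩
    simp only [hep, Equiv.ofBijective_apply]
    exact (Option.some_get h).symm
  have hcard : Fintype.card {j // ¬ p j} = Fintype.card {u // ¬ q u} := by
    have h1 := Fintype.card_congr ep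
    have h2 := Fintype.card_subtype_compl p
    have h3 := Fintype.card_subtype_compl q
    rw [h2, h3, h1]
  -- the forbidden partial map
  set Fo : Fin m → Option (Fin m) :=
    fun j => if h : ∃ u, col (E j) = col (X u) then some h.choose else none with hFo
  have hFoSpec : ∀ j u, Fo j = some u → col (E j) = col (X u) := by
    intro j u hj
    simp only [hFo] at hj
    split at hj
    · rename_i h
      obtain rfl : h.choose = u := by simpa using hj
      exact h.choose_spec
    · exact absurd hj (by simp)
  have hFoAll : ∀ j u, col (E j) = col (X u) → Fo j = some u := by
    intro j u hju
    have h : ∃ u, col (E j) = col (X u) := ⟨u, hju⟩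
    have : h.choose = u := hcX (h.choose_spec.symm.trans hju)
    simp [hFo, dif_pos h, this]
  set m' := Fintype.card {j // ¬ p j} with hm'
  rcases Nat.lt_or_ge m' 2 with hlt | hge
  · -- m' = 0 or 1
    rcases Nat.lt_or_ge m' 1 with hm0 | hm1
    · -- m' = 0 : all matched
      have hall : ∀ j, p j := by
        intro j
        by_contra h
        have : 0 < Fintype.card {j // ¬ p j} := @Fintype.card_pos _ _ ⟨⟨j, h⟩⟩
        omega
      obtain ⟨ψ, hψ⟩ := extend_partial_inj Mo hMoInj
      left
      refine ⟨ψ, fun j u hju => hψ j u (hMoAll j u hju), fun j _ => ?_⟩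
      have hj := hall j
      have : Mo j = some ((Mo j).get hj) := (Option.some_get hj).symm
      rw [hψ j _ this]
      exact hMoSpec j _ this
    · -- m' = 1
      have hm1' : m' = 1 := by omega
      obtain ⟨j0, hj0⟩ := Fintype.card_eq_one_iff.mp (hm' ▸ hm1')
      obtain ⟨u0, hu0⟩ := Fintype.card_eq_one_iff.mp (hcard ▸ hm1')
      -- j0 : the unique unmatched entry ; u0 : unique unmatched exit
      by_cases hcc : col (E j0.1) = col (X u0.1)
      · -- ultra case
        right
        refine ⟨j0.1, u0.1, hcc, ?_, ?_⟩
        · intro u hEX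
          have : p j0.1 := by simp [hp, hMoAll _ _ hEX]
          exact j0.2 this
        · intro j hj
          have hpj : p j := by
            by_contra h
            exact hj (congrArg Subtype.val (hj0 ⟨j, h⟩))
          have hMj : Mo j = some ((Mo j).get hpj) := (Option.some_get hpj).symm
          refine ⟨(Mo j).get hpj, ?_, hMoSpec j _ hMj⟩
          intro he
          have : q u0.1 := ⟨j, he ▸ hMj⟩
          exact u0.2 this
      · -- good case with the unique pair (j0, u0)
        set Mo' : Fin m → Option (Fin m) := fun j => if j = j0.1 then some u0.1 else Mo j with hMo'
        have hMo'Inj : ∀ j1 j2 u, Mo' j1 = some u → Mo' j2 = some u → j1 = j2 := by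
          intro j1 j2 u h1 h2
          simp only [hMo'] at h1 h2
          split at h1 <;> split at h2
          · rename_i e1 e2; rw [e1, e2]
          · rename_i e1 e2
            obtain rfl : u0.1 = u := by simpa using h1
            exact absurd ⟨j2, h2⟩ u0.2
          · rename_i e1 e2
            obtain rfl : u0.1 = u := by simpa using h2
            exact absurd ⟨j1, h1⟩ u0.2
          · exact hMoInj _ _ _ h1 h2
        obtain ⟨ψ, hψ⟩ := extend_partial_inj Mo' hMo'Inj
        left
        have hψj0 : ψ j0.1 = u0.1 := hψ _ _ (by simp [hMo'])
        have hψMo : ∀ j u, Mo j = some u → ψ j = u := by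
          intro j u hj
          have hjne : j ≠ j0.1 := by
            intro he
            exact j0.2 (by simp [hp, he ▸ hj])
          exact hψ j u (by simp [hMo', hjne, hj])
        refine ⟨ψ, fun j u hju => hψMo j u (hMoAll j u hju), fun j hcol => ?_⟩
        by_cases hpj : p j
        · have hMj : Mo j = some ((Mo j).get hpj) := (Option.some_get hpj).symm
          rw [hψMo j _ hMj]
          exact hMoSpec j _ hMj
        · have : j = j0.1 := congrArg Subtype.val (hj0 ⟨j, hpj⟩)
          subst this
          rw [hψj0] at hcol
          exact absurd hcol hcc
  · -- m' ≥ 2 : build complement equivalence avoiding the forbidden map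
    have hne : NeZero m' := ⟨by omega⟩
    set eA : {j // ¬ p j} ≃ Fin m' := Fintype.equivFinOfCardEq rfl with heA
    set eB : {u // ¬ q u} ≃ Fin m' := Fintype.equivFinOfCardEq hcard.symm with heB
    set φ : Fin m' → Option (Fin m') := fun i =>
      if h : ∃ uB : {u // ¬ q u}, Fo (eA.symm i).1 = some uB.1 then some (eB h.choose) else none
      with hφ
    have hφSpec : ∀ i w, φ i = some w → Fo (eA.symm i).1 = some (eB.symm w).1 := by
      intro i w hi
      simp only [hφ] at hi
      split at hi
      · rename_i h
        obtain rfl : eB h.choose = w := by simpa using hi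
        rw [Equiv.symm_apply_apply]
        exact h.choose_spec
      · exact absurd hi (by simp)
    have hφInj : ∀ i1 i2 w, φ i1 = some w → φ i2 = some w → i1 = i2 := by
      intro i1 i2 w h1 h2
      have e1 := hφSpec _ _ h1
      have e2 := hφSpec _ _ h2
      have c1 := hFoSpec _ _ e1
      have c2 := hFoSpec _ _ e2
      have : (eA.symm i1) = (eA.symm i2) := Subtype.ext (hcE (c1.trans c2.symm))
      exact eA.symm.injective this
    obtain ⟨ξ, hξ⟩ := extend_partial_inj φ hφInj
    set κ : Equiv.Perm (Fin m') := Equiv.addLeft (1 : Fin m') with hκ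
    have hκne : ∀ i : Fin m', κ i ≠ i := by
      intro i he
      have hthis : (1 : Fin m') + i = i := he
      have h0 : (1 : Fin m') + i = 0 + i := by rw [zero_add]; exact hthis
      have h1 : (1 : Fin m') = 0 := add_right_cancel h0
      have hv : (1 : ℕ) % m' = 0 := by
        have hv' := congrArg Fin.val h1
        rwa [Fin.val_one', Fin.val_zero] at hv'
      have := Nat.mod_eq_of_lt (show 1 < m' by omega)
      omega
    set en : {j // ¬ p j} ≃ {u // ¬ q u} := (eA.trans (κ.trans ξ)).trans eB.symm with hen
    obtain ⟨π, hπ1, hπ2⟩ := glue_perm p q ep en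
    left
    have hπMo : ∀ j u, Mo j = some u → π j = u := by
      intro j u hj
      have hpj : p j := by simp [hp, hj]
      rw [hπ1 j hpj]
      have := hepSpec ⟨j, hpj⟩
      rw [hj] at this
      exact (Option.some_inj.mp this).symm
    refine ⟨π, fun j u hju => hπMo j u (hMoAll j u hju), fun j hcol => ?_⟩
    by_cases hpj : p j
    · have hMj : Mo j = some ((Mo j).get hpj) := (Option.some_get hpj).symm
      rw [hπMo j _ hMj]
      exact hMoSpec j _ hMj
    · exfalso
      rw [hπ2 j hpj] at hcol
      -- π j = en ⟨j,hpj⟩ ∈ B, and Fo j = some (π j)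
      set uB : {u // ¬ q u} := en ⟨j, hpj⟩ with huB
      have hFoj : Fo j = some uB.1 := hFoAll _ _ hcol
      have hsymm : eA.symm (eA ⟨j, hpj⟩) = ⟨j, hpj⟩ := Equiv.symm_apply_apply _ _
      have hh : ∃ uB' : {u // ¬ q u}, Fo ((⟨j, hpj⟩ : {j' // ¬ p j'}) : Fin m) = some uB'.1 :=
        ⟨uB, hFoj⟩
      have hch : hh.choose = uB :=
        Subtype.ext (Option.some_inj.mp (hh.choose_spec.symm.trans hFoj))
      have hφA : φ (eA ⟨j, hpj⟩) = some (eB uB) := by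
        show (if h : ∃ uB' : {u // ¬ q u}, Fo (eA.symm (eA ⟨j, hpj⟩)).1 = some uB'.1
            then some (eB h.choose) else none) = some (eB uB)
        rw [hsymm]
        rw [dif_pos hh, hch]
      have hξA := hξ _ _ hφA
      have hen' : uB = eB.symm (ξ (κ (eA ⟨j, hpj⟩))) := by
        rw [huB, hen]
        rfl
      have heq : ξ (κ (eA ⟨j, hpj⟩)) = ξ (eA ⟨j, hpj⟩) := by
        rw [hξA, hen']
        simp
      exact hκne _ (ξ.injective heq)
  
end Pairing

section TwoStepLemmas

variable {ν0 β0 νT βT : Type} {Δ k : ℕ}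
  {adj0 : ν0 → β0 → Prop} {groupT : νT → Fin Δ} {adjT : νT → βT → Prop}
  {adjH : ν0 × Fin k → β0 × βT → Prop}

/-- In a copy `T_A`, a block is adjacent to at most one node in each column. -/
lemma TwoStep.H1 (h2 : TwoStep Δ k adj0 groupT adjT adjH)
    {A : β0} {c : βT} {y : ν0} {j j' : Fin k}
    (h : adjH (y, j) (A, c)) (h' : adjH (y, j') (A, c)) : j = j' := by
  obtain ⟨enum, f, g, henum, hadj, hsurj, hfst, hiff⟩ := h2.copy A
  set b := g.symm c with hb
  have hgb : g b = c := g.apply_symm_apply c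
  set x : νT := f.symm ⟨(y, j), h2.supp _ A c h⟩ with hx
  set x' : νT := f.symm ⟨(y, j'), h2.supp _ A c h'⟩ with hx'
  have hfx : (f x : ν0 × Fin k) = (y, j) := by rw [hx, Equiv.apply_symm_apply]
  have hfx' : (f x' : ν0 × Fin k) = (y, j') := by rw [hx', Equiv.apply_symm_apply]
  have hxb : adjT x b := by
    rw [hiff x b, hfx, hgb]; exact h
  have hx'b : adjT x' b := by
    rw [hiff x' b, hfx', hgb]; exact h'
  have hgx : enum (groupT x) = y := by
    have := hfst x; rw [hfx] at this; exact this.symm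
  have hgx' : enum (groupT x') = y := by
    have := hfst x'; rw [hfx'] at this; exact this.symm
  have hgrp : groupT x' = groupT x := henum (hgx'.trans hgx.symm)
  obtain ⟨z, -, hz⟩ := h2.td.blockMeets b (groupT x)
  have e1 : x = z := hz x ⟨rfl, hxb⟩
  have e2 : x' = z := hz x' ⟨hgrp, hx'b⟩
  have : (y, j) = (y, j') := by rw [← hfx, ← hfx', e1, e2]
  exact (Prod.mk.injEq _ _ _ _ ▸ this).2

/-- Generated blocks in a copy `T_A`. -/
lemma TwoStep.HGen (h2 : TwoStep Δ k adj0 groupT adjT adjH)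
    {A : β0} {y y' : ν0} (j j' : Fin k) (hy : adj0 y A) (hy' : adj0 y' A) (hne : y ≠ y') :
    ∃ d, adjH (y, j) (A, d) ∧ adjH (y', j') (A, d) := by
  obtain ⟨enum, f, g, henum, hadj, hsurj, hfst, hiff⟩ := h2.copy A
  set x : νT := f.symm ⟨(y, j), hy⟩ with hx
  set x' : νT := f.symm ⟨(y', j'), hy'⟩ with hx'
  have hfx : (f x : ν0 × Fin k) = (y, j) := by rw [hx, Equiv.apply_symm_apply]
  have hfx' : (f x' : ν0 × Fin k) = (y', j') := by rw [hx', Equiv.apply_symm_apply]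
  have hgx : enum (groupT x) = y := by
    have := hfst x; rw [hfx] at this; exact this.symm
  have hgx' : enum (groupT x') = y' := by
    have := hfst x'; rw [hfx'] at this; exact this.symm
  have hgrp : groupT x ≠ groupT x' := by
    intro hgg; exact hne (hgx ▸ hgx' ▸ congrArg enum hgg)
  obtain ⟨bb, ⟨hb1, hb2⟩, -⟩ := h2.td.pairGen x x' hgrp
  refine ⟨g bb, ?_, ?_⟩
  · have := (hiff x bb).mp hb1; rwa [hfx] at this
  · have := (hiff x' bb).mp hb2; rwa [hfx'] at this

/-- Every node-column adjacent to a block of `H` has exactly one level adjacent to it. -/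
lemma TwoStep.HNbr (h2 : TwoStep Δ k adj0 groupT adjT adjH)
    (A : β0) (V : βT) {y : ν0} (hy : adj0 y A) :
    ∃ j, adjH (y, j) (A, V) := by
  obtain ⟨enum, f, g, henum, hadj, hsurj, hfst, hiff⟩ := h2.copy A
  set b := g.symm V with hb
  have hgb : g b = V := g.apply_symm_apply V
  obtain ⟨i, hi⟩ := hsurj y hy
  obtain ⟨x, ⟨hxg, hxb⟩, -⟩ := h2.td.blockMeets b i
  have hfst' : (f x : ν0 × Fin k).1 = y := by rw [hfst x, hxg, hi]
  refine ⟨(f x : ν0 × Fin k).2, ?_⟩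
  have := (hiff x b).mp hxb
  rw [hgb] at this
  have hpair : (f x : ν0 × Fin k) = (y, (f x : ν0 × Fin k).2) := by
    exact Prod.ext hfst' rfl
  rwa [hpair] at this

end TwoStepLemmas

section Decomp

variable {ν0 β0 : Type} {adj0 : ν0 → β0 → Prop}

/-- A chain in `H0` starting at node `a`, alternating blocks and nodes. -/
def Chain0 (adj0 : ν0 → β0 → Prop) : ν0 → List (β0 × ν0) → ν0 → Prop
  | a, [], b => a = b
  | a, (A, y) :: c, b => adj0 a A ∧ adj0 y A ∧ Chain0 adj0 y c b

lemma decompAux {B : β0} :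
    ∀ (n : ℕ) (a : ν0) (W : (bipGraph adj0).Walk (Sum.inl a) (Sum.inr B)),
      W.length = n → W.IsPath →
      ∃ c p2, Chain0 adj0 a c p2 ∧ adj0 p2 B ∧ n = 2 * c.length + 1 ∧
        (c.map Prod.fst).Nodup ∧ (a :: c.map Prod.snd).Nodup ∧ B ∉ c.map Prod.fst ∧
        (∀ A' ∈ c.map Prod.fst, (Sum.inr A' : ν0 ⊕ β0) ∈ W.support) ∧
        (∀ y' ∈ a :: c.map Prod.snd, (Sum.inl y' : ν0 ⊕ β0) ∈ W.support) := by
  intro n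
  induction n using Nat.strong_induction_on with
  | _ n IHn =>
  intro a W hlen hpath
  cases W with
  | cons h W' =>
    rename_i v
    cases v with
    | inl a2 => exact absurd h bip_not_inl_inl
    | inr A =>
      rw [SimpleGraph.Walk.cons_isPath_iff] at hpath
      cases W' with
      | nil =>
        refine ⟨[], a, rfl, bip_adj_inl_inr.mp h, by simpa using hlen.symm, by simp, by simp,
          by simp, by simp, by simp⟩
      | cons h2 W'' =>
        rename_i v2
        cases v2 with
        | inr A2 => exact absurd h2 bip_not_inr_inr
        | inl p1 =>
          rw [SimpleGraph.Walk.cons_isPath_iff] at hpath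
          obtain ⟨⟨hW''path, hAnotin⟩, hanotin⟩ := hpath
          have hAB : A ≠ B := by
            rintro rfl
            exact hAnotin (SimpleGraph.Walk.end_mem_support W'')
          have hlt : W''.length < n := by
            rw [← hlen]; simp [SimpleGraph.Walk.length_cons]
          obtain ⟨c', p2, hchain, hp2, hlen', hndA, hndY, hBnotin, hmemA, hmemY⟩ :=
            IHn W''.length hlt p1 W'' rfl hW''path
          refine ⟨(A, p1) :: c', p2,
            ⟨bip_adj_inl_inr.mp h, bip_adj_inr_inl.mp h2, hchain⟩, hp2, ?_, ?_, ?_, ?_, ?_, ?_⟩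
          · rw [← hlen]; simp [SimpleGraph.Walk.length_cons]; omega
          · rw [List.map_cons]
            exact List.nodup_cons.mpr ⟨fun hmem => hAnotin (hmemA A hmem), hndA⟩
          · rw [List.map_cons]
            refine List.nodup_cons.mpr ⟨fun hmem => hanotin ?_, hndY⟩
            rw [SimpleGraph.Walk.support_cons]
            exact List.mem_cons_of_mem _ (hmemY a hmem)
          · simp only [List.map_cons, List.mem_cons]
            rintro (rfl | hmem)
            · exact hAB rfl
            · exact hBnotin hmem
          · intro A' hA'
            simp only [List.map_cons, List.mem_cons] at hA'
            rcases hA' with rfl | hmem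
            · simp [SimpleGraph.Walk.support_cons]
            · simp only [SimpleGraph.Walk.support_cons, List.mem_cons]
              exact Or.inr (Or.inr (hmemA A' hmem))
          · intro y' hy'
            simp only [List.map_cons, List.mem_cons] at hy'
            simp only [SimpleGraph.Walk.support_cons, List.mem_cons]
            rcases hy' with rfl | hy'
            · exact Or.inl rfl
            · exact Or.inr (Or.inr (hmemY y' (by simpa using hy')))

lemma chain_end_mem {a b : ν0} {c : List (β0 × ν0)} (h : Chain0 adj0 a c b) :
    b ∈ a :: c.map Prod.snd := by
  induction c generalizing a with
  | nil => obtain rfl : a = b := h; simp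
  | cons Ay c' IH =>
    obtain ⟨A, y⟩ := Ay
    obtain ⟨-, -, h'⟩ := h
    have := IH h'
    simp only [List.map_cons, List.mem_cons] at this ⊢
    tauto

end Decomp

section MegaLift

variable {ν0 β0 νT βT : Type} {Δ k m : ℕ}
  {adj0 : ν0 → β0 → Prop} {groupT : νT → Fin Δ} {adjT : νT → βT → Prop}
  {adjH : ν0 × Fin k → β0 × βT → Prop}

/-- The family of lifted middle walks, pairwise disjoint. -/
lemma megalift (h2 : TwoStep Δ k adj0 groupT adjT adjH)
    (L : Fin m → ν0 → Fin k) (hL : ∀ (y : ν0) (j u : Fin m), L j y = L u y → j = u) :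
    ∀ (c : List (β0 × ν0)) (a b : ν0), Chain0 adj0 a c b →
      (c.map Prod.fst).Nodup → (a :: c.map Prod.snd).Nodup →
      ∃ W : (j : Fin m) → (bipGraph adjH).Walk (Sum.inl (a, L j a)) (Sum.inl (b, L j b)),
        (∀ j, (W j).length = 2 * c.length) ∧
        (∀ j v, v ∈ (W j).support →
          (∃ y, y ∈ a :: c.map Prod.snd ∧ v = Sum.inl (y, L j y)) ∨
          (∃ A d, A ∈ c.map Prod.fst ∧ v = Sum.inr (A, d))) ∧
        (∀ j u v, j ≠ u → v ∈ (W j).support → v ∈ (W u).support → False) := by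
  intro c
  induction c with
  | nil =>
    intro a b hc _ _
    obtain rfl : a = b := hc
    refine ⟨fun j => .nil, by simp, ?_, ?_⟩
    · intro j v hv
      simp only [SimpleGraph.Walk.support_nil, List.mem_singleton] at hv
      exact Or.inl ⟨a, by simp, hv⟩
    · intro j u v hju hvj hvu
      simp only [SimpleGraph.Walk.support_nil, List.mem_singleton] at hvj hvu
      rw [hvj] at hvu
      exact hju (hL a j u (by simpa using hvu))
  | cons Ay c' IHc =>
    obtain ⟨A, y⟩ := Ay
    intro a b hc hndA hndY
    obtain ⟨haA, hyA, hc'⟩ := hc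
    rw [List.map_cons, List.nodup_cons] at hndA
    have hndY' : (y :: c'.map Prod.snd).Nodup := by
      rw [List.map_cons] at hndY
      exact (List.nodup_cons.mp hndY).2
    have haney : a ≠ y := by
      rw [List.map_cons, List.nodup_cons] at hndY
      intro he
      exact hndY.1 (he ▸ List.mem_cons_self)
    have hanotin : a ∉ y :: c'.map Prod.snd := by
      rw [List.map_cons, List.nodup_cons] at hndY
      exact hndY.1
    obtain ⟨W', hlen', hchar', hdisj'⟩ := IHc y b hc' hndA.2 hndY'
    have hgen : ∀ j : Fin m, ∃ d, adjH (a, L j a) (A, d) ∧ adjH (y, L j y) (A, d) :=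
      fun j => h2.HGen (L j a) (L j y) haA hyA haney
    choose d hd1 hd2 using hgen
    refine ⟨fun j => .cons (bip_adj_inl_inr.mpr (hd1 j))
        (.cons (bip_adj_inr_inl.mpr (hd2 j)) (W' j)), ?_, ?_, ?_⟩
    · intro j; simp [SimpleGraph.Walk.length_cons, hlen' j, List.length_cons]; ring
    · intro j v hv
      simp only [SimpleGraph.Walk.support_cons, List.mem_cons] at hv
      rcases hv with rfl | rfl | hv
      · exact Or.inl ⟨a, by simp, rfl⟩
      · exact Or.inr ⟨A, d j, by simp, rfl⟩
      · rcases hchar' j v hv with ⟨y', hy', hvy⟩ | ⟨A', d', hA', hvA⟩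
        · exact Or.inl ⟨y', by simp only [List.map_cons, List.mem_cons] at hy' ⊢; tauto, hvy⟩
        · exact Or.inr ⟨A', d', by simp only [List.map_cons, List.mem_cons] at hA' ⊢; tauto, hvA⟩
    · intro j u v hju hvj hvu
      simp only [SimpleGraph.Walk.support_cons, List.mem_cons] at hvj hvu
      have hnodemem : ∀ (jj uu : Fin m), (Sum.inl (a, L jj a) : (ν0 × Fin k) ⊕ (β0 × βT)) ∈ (W' uu).support → False := by
        intro jj uu hmem
        rcases hchar' uu _ hmem with ⟨y', hy', hvy⟩ | ⟨A', d', hA', hvA⟩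
        · obtain ⟨h1, -⟩ : a = y' ∧ L jj a = L uu y' := by simpa using hvy
          exact hanotin (h1 ▸ hy')
        · simp at hvA
      have hblockmem : ∀ (jj uu : Fin m), (Sum.inr (A, d jj) : (ν0 × Fin k) ⊕ (β0 × βT)) ∈ (W' uu).support → False := by
        intro jj uu hmem
        rcases hchar' uu _ hmem with ⟨y', hy', hvy⟩ | ⟨A', d', hA', hvA⟩
        · simp at hvy
        · obtain ⟨h1, -⟩ : A = A' ∧ d jj = d' := by simpa using hvA
          exact hndA.1 (h1 ▸ hA')
      rcases hvj with rfl | rfl | hvj <;> rcases hvu with huv | huv | hvu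
      · exact hju (hL a j u (by simpa using huv))
      · simp at huv
      · exact hnodemem j u hvu
      · simp at huv
      · have hdd : d j = d u := by simpa using huv
        exact hju (hL a j u (h2.H1 (hd1 j) (hdd ▸ hd1 u)))
      · exact hblockmem j u hvu
      · rcases huv with rfl
        exact hnodemem u j hvj
      · rcases huv with rfl
        exact hblockmem u j hvj
      · exact hdisj' j u v hju hvj hvu

end MegaLift

/-- Let `k, Δ, d ≥ 2` and let `H` (given by `adjH`) be built by the
2-step method from the connected `(d,Δ)`-bipartite graph `H0` using the
`[Δ,k]`-transversal design `T`.  Let `Q` and `Q'` be distinct blocks of `H0` joined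
by `lam ≥ 1` pairwise internally-disjoint paths, each of length at most `μ`.  Then
for any blocks `(Q, V) ∈ B_Q` and `(Q', V') ∈ B_{Q'}` of `H` there are `min Δ k`
pairwise internally-disjoint paths in `H` from `(Q, V)` to `(Q', V')`, each of
length at most `μ + 4`. -/
theorem twoStep_one_to_one_min {ν0 β0 νT βT : Type} (d Δ k lam μ : ℕ)
    (hd : 2 ≤ d) (hΔ : 2 ≤ Δ) (hk : 2 ≤ k)
    (adj0 : ν0 → β0 → Prop) (groupT : νT → Fin Δ) (adjT : νT → βT → Prop)
    (adjH : ν0 × Fin k → β0 × βT → Prop)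
    (hH0 : IsBipartiteDegRank d Δ adj0)
    (hconn : (bipGraph adj0).Connected)
    (h2 : TwoStep Δ k adj0 groupT adjT adjH)
    (Q Q' : β0) (hQQ : Q ≠ Q') (hlam : 1 ≤ lam)
    (q : Fin lam → (bipGraph adj0).Walk (Sum.inr Q) (Sum.inr Q'))
    (hq : ∀ i : Fin lam, (q i).IsPath ∧ (q i).length ≤ μ)
    (hqd : PairwiseInternallyDisjoint q)
    (V V' : βT) :
    ∃ p : Fin (min Δ k) →
        (bipGraph adjH).Walk (Sum.inr (Q, V)) (Sum.inr (Q', V')),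
      (∀ i, (p i).IsPath ∧ (p i).length ≤ μ + 4) ∧
      PairwiseInternallyDisjoint p := by
  classical
  set m := min Δ k with hm
  have hm2 : 2 ≤ m := le_min hΔ hk
  have hmΔ : m ≤ Δ := min_le_left _ _
  have hmk : m ≤ k := min_le_right _ _
  obtain ⟨hq0path, hq0len⟩ := hq ⟨0, hlam⟩
  revert hq0path hq0len
  cases hq0eq : q ⟨0, hlam⟩ with
  | nil => exact absurd rfl hQQ
  | cons h W1 =>
    rename_i v
    cases v with
    | inr A2 => exact absurd h bip_not_inr_inr
    | inl p1 =>
      intro hq0path hq0len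
      rw [SimpleGraph.Walk.cons_isPath_iff] at hq0path
      obtain ⟨hW1path, hQnotin1⟩ := hq0path
      obtain ⟨c, p2, hchain, hp2Q', hlen1, hndA, hndY, hQ'notinA, hmemA, hmemY⟩ :=
        decompAux W1.length p1 W1 rfl hW1path
      have hQnotinA : Q ∉ c.map Prod.fst := fun hmem => hQnotin1 (hmemA Q hmem)
      have hp1Q : adj0 p1 Q := bip_adj_inr_inl.mp h
      have hμ : 2 * c.length + 2 ≤ μ := by
        rw [SimpleGraph.Walk.length_cons] at hq0len
        omega
      -- neighbour embeddings
      have hfinQ : Finite {x : ν0 // adj0 x Q} := by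
        have h0 : 0 < Nat.card {x : ν0 // adj0 x Q} := by rw [hH0.2 Q]; omega
        exact (Nat.card_pos_iff.mp h0).2
      have hfinQ' : Finite {x : ν0 // adj0 x Q'} := by
        have h0 : 0 < Nat.card {x : ν0 // adj0 x Q'} := by rw [hH0.2 Q']; omega
        exact (Nat.card_pos_iff.mp h0).2
      letI fQ : Fintype {x : ν0 // adj0 x Q} := Fintype.ofFinite _
      letI fQ' : Fintype {x : ν0 // adj0 x Q'} := Fintype.ofFinite _
      have hcardQ : Fintype.card {x : ν0 // adj0 x Q} = Δ := by
        rw [← Nat.card_eq_fintype_card]; exact hH0.2 Q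
      have hcardQ' : Fintype.card {x : ν0 // adj0 x Q'} = Δ := by
        rw [← Nat.card_eq_fintype_card]; exact hH0.2 Q'
      obtain ⟨ρE⟩ : Nonempty (Fin m ↪ {x : ν0 // adj0 x Q}) :=
        Function.Embedding.nonempty_of_card_le (by rw [hcardQ, Fintype.card_fin]; omega)
      obtain ⟨ρX⟩ : Nonempty (Fin m ↪ {x : ν0 // adj0 x Q'}) :=
        Function.Embedding.nonempty_of_card_le (by rw [hcardQ', Fintype.card_fin]; omega)
      choose lvlE hlvlEadj using fun j : Fin m => h2.HNbr Q V (ρE j).2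
      choose lvlX hlvlXadj using fun u : Fin m => h2.HNbr Q' V' (ρX u).2
      set E : Fin m → ν0 × Fin k := fun j => ((ρE j).1, lvlE j) with hEdef
      set X : Fin m → ν0 × Fin k := fun u => ((ρX u).1, lvlX u) with hXdef
      have hEadj : ∀ j, adjH (E j) (Q, V) := fun j => hlvlEadj j
      have hXadj : ∀ u, adjH (X u) (Q', V') := fun u => hlvlXadj u
      have hEQ : ∀ j, adj0 (E j).1 Q := fun j => (ρE j).2
      have hXQ' : ∀ u, adj0 (X u).1 Q' := fun u => (ρX u).2
      have hcolE : Function.Injective fun j => (E j).1 := by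
        intro j u hju
        exact ρE.injective (Subtype.coe_injective hju)
      have hcolX : Function.Injective fun u => (X u).1 := by
        intro j u hju
        exact ρX.injective (Subtype.coe_injective hju)
      have hEinj : Function.Injective E := fun j u hju => hcolE (congrArg Prod.fst hju)
      have hXinj : Function.Injective X := fun j u hju => hcolX (congrArg Prod.fst hju)
      rcases pairing_dichotomy E X hEinj hXinj Prod.fst hcolE hcolX with
        ⟨π, hπ1, hπ2⟩ | ⟨j0, u0, hcc, hnomatch, hmatched⟩
      · -- MAIN BRANCH
        set X' : Fin m → ν0 × Fin k := fun j => X (π j) with hX'def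
        have hX'adj : ∀ j, adjH (X' j) (Q', V') := fun j => hXadj (π j)
        have hX'Q' : ∀ j, adj0 (X' j).1 Q' := fun j => hXQ' (π j)
        have hcolX' : Function.Injective fun j => (X' j).1 := fun j u hju =>
          π.injective (hcolX hju)
        have hX'inj : Function.Injective X' := fun j u hju => π.injective (hXinj hju)
        have P1 : ∀ j u, j ≠ u → E j ≠ X' u := by
          intro j u hju he
          exact hju (π.injective (hπ1 j (π u) he))
        have P2 : ∀ j, (E j).1 = (X' j).1 → E j = X' j := fun j hcol => hπ2 j hcol
        -- level functions
        have hlev : ∀ y : ν0, ∃ ℓ : Fin m ↪ Fin k,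
            (∀ j, (E j).1 = y → ℓ j = (E j).2) ∧ (∀ j, (X' j).1 = y → ℓ j = (X' j).2) := by
          intro y
          by_cases hEy : ∃ j1, (E j1).1 = y
          · obtain ⟨j1, hj1⟩ := hEy
            by_cases hXy : ∃ j2, (X' j2).1 = y
            · obtain ⟨j2, hj2⟩ := hXy
              obtain ⟨ℓ, hl1, hl2⟩ := emb_two hmk j1 j2 (E j1).2 (X' j2).2
                (fun he => by
                  subst he
                  exact congrArg Prod.snd (P2 j1 (hj1.trans hj2.symm)))
                (fun hne hv => hne (False.elim
                  (P1 j1 j2 hne (Prod.ext (hj1.trans hj2.symm) hv))))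
              refine ⟨ℓ, ?_, ?_⟩
              · intro j hj
                obtain rfl : j = j1 := hcolE (hj.trans hj1.symm)
                exact hl1
              · intro j hj
                obtain rfl : j = j2 := hcolX' (hj.trans hj2.symm)
                exact hl2
            · obtain ⟨ℓ, hl1, -⟩ := emb_two hmk j1 j1 (E j1).2 (E j1).2
                (fun _ => rfl) (fun hne => absurd rfl hne)
              refine ⟨ℓ, ?_, fun j hj => absurd ⟨j, hj⟩ hXy⟩
              intro j hj
              obtain rfl : j = j1 := hcolE (hj.trans hj1.symm)
              exact hl1
          · by_cases hXy : ∃ j2, (X' j2).1 = y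
            · obtain ⟨j2, hj2⟩ := hXy
              obtain ⟨ℓ, hl1, -⟩ := emb_two hmk j2 j2 (X' j2).2 (X' j2).2
                (fun _ => rfl) (fun hne => absurd rfl hne)
              refine ⟨ℓ, fun j hj => absurd ⟨j, hj⟩ hEy, ?_⟩
              intro j hj
              obtain rfl : j = j2 := hcolX' (hj.trans hj2.symm)
              exact hl1
            · exact ⟨Fin.castLEEmb hmk, fun j hj => absurd ⟨j, hj⟩ hEy,
                fun j hj => absurd ⟨j, hj⟩ hXy⟩
        choose Lfun hLE hLX using hlev
        set L : Fin m → ν0 → Fin k := fun j y => Lfun y j with hLdef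
        have hLinj : ∀ (y : ν0) (j u : Fin m), L j y = L u y → j = u :=
          fun y j u hju => (Lfun y).injective hju
        have hLEforce : ∀ j, L j (E j).1 = (E j).2 := fun j => hLE (E j).1 j rfl
        have hLXforce : ∀ j, L j (X' j).1 = (X' j).2 := fun j => hLX (X' j).1 j rfl
        obtain ⟨Wmid, hWlen, hWchar, hWdisj⟩ := megalift h2 L hLinj c p1 p2 hchain hndA hndY
        -- entry walks
        have hentry : ∀ j, ∃ S : (bipGraph adjH).Walk (Sum.inr (Q, V)) (Sum.inl (p1, L j p1)),
            S.length ≤ 3 ∧ ∀ v ∈ S.support,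
              v = Sum.inr (Q, V) ∨ v = Sum.inl (E j) ∨ v = Sum.inl (p1, L j p1) ∨
              ∃ dd, v = Sum.inr (Q, dd) ∧ adjH (p1, L j p1) (Q, dd) := by
          intro j
          by_cases hdir : (E j).1 = p1
          · have hEeq : E j = (p1, L j p1) := by
              have h1 := hLEforce j
              rw [hdir] at h1
              exact Prod.ext hdir h1.symm
            have a1 : (bipGraph adjH).Adj (Sum.inr (Q, V)) (Sum.inl (p1, L j p1)) := by
              rw [← hEeq]; exact bip_adj_inr_inl.mpr (hEadj j)
            refine ⟨.cons a1 .nil, by simp, ?_⟩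
            intro v hv
            simp only [SimpleGraph.Walk.support_cons, SimpleGraph.Walk.support_nil,
              List.mem_cons, List.not_mem_nil, or_false] at hv
            rcases hv with rfl | rfl
            · exact Or.inl rfl
            · exact Or.inr (Or.inr (Or.inl rfl))
          · obtain ⟨dd, hdd1, hdd2⟩ := h2.HGen (E j).2 (L j p1) (hEQ j) hp1Q hdir
            have a1 : (bipGraph adjH).Adj (Sum.inr (Q, V)) (Sum.inl (E j)) :=
              bip_adj_inr_inl.mpr (hEadj j)
            have a2 : (bipGraph adjH).Adj (Sum.inl (E j)) (Sum.inr (Q, dd)) :=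
              bip_adj_inl_inr.mpr hdd1
            have a3 : (bipGraph adjH).Adj (Sum.inr (Q, dd)) (Sum.inl (p1, L j p1)) :=
              bip_adj_inr_inl.mpr hdd2
            refine ⟨.cons a1 (.cons a2 (.cons a3 .nil)), by simp, ?_⟩
            intro v hv
            simp only [SimpleGraph.Walk.support_cons, SimpleGraph.Walk.support_nil,
              List.mem_cons, List.not_mem_nil, or_false] at hv
            rcases hv with rfl | rfl | rfl | rfl
            · exact Or.inl rfl
            · exact Or.inr (Or.inl rfl)
            · exact Or.inr (Or.inr (Or.inr ⟨dd, rfl, hdd2⟩))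
            · exact Or.inr (Or.inr (Or.inl rfl))
        -- exit walks
        have hexit : ∀ j, ∃ S : (bipGraph adjH).Walk (Sum.inl (p2, L j p2)) (Sum.inr (Q', V')),
            S.length ≤ 3 ∧ ∀ v ∈ S.support,
              v = Sum.inr (Q', V') ∨ v = Sum.inl (X' j) ∨ v = Sum.inl (p2, L j p2) ∨
              ∃ dd, v = Sum.inr (Q', dd) ∧ adjH (p2, L j p2) (Q', dd) := by
          intro j
          by_cases hdir : (X' j).1 = p2
          · have hXeq : X' j = (p2, L j p2) := by
              have h1 := hLXforce j
              rw [hdir] at h1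
              exact Prod.ext hdir h1.symm
            have a1 : (bipGraph adjH).Adj (Sum.inl (p2, L j p2)) (Sum.inr (Q', V')) := by
              rw [← hXeq]; exact bip_adj_inl_inr.mpr (hX'adj j)
            refine ⟨.cons a1 .nil, by simp, ?_⟩
            intro v hv
            simp only [SimpleGraph.Walk.support_cons, SimpleGraph.Walk.support_nil,
              List.mem_cons, List.not_mem_nil, or_false] at hv
            rcases hv with rfl | rfl
            · exact Or.inr (Or.inr (Or.inl rfl))
            · exact Or.inl rfl
          · obtain ⟨dd, hdd1, hdd2⟩ := h2.HGen (L j p2) (X' j).2 hp2Q' (hX'Q' j)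
              (fun he => hdir he.symm)
            have a1 : (bipGraph adjH).Adj (Sum.inl (p2, L j p2)) (Sum.inr (Q', dd)) :=
              bip_adj_inl_inr.mpr hdd1
            have a2 : (bipGraph adjH).Adj (Sum.inr (Q', dd)) (Sum.inl (X' j)) :=
              bip_adj_inr_inl.mpr hdd2
            have a3 : (bipGraph adjH).Adj (Sum.inl (X' j)) (Sum.inr (Q', V')) :=
              bip_adj_inl_inr.mpr (hX'adj j)
            refine ⟨.cons a1 (.cons a2 (.cons a3 .nil)), by simp, ?_⟩
            intro v hv
            simp only [SimpleGraph.Walk.support_cons, SimpleGraph.Walk.support_nil,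
              List.mem_cons, List.not_mem_nil, or_false] at hv
            rcases hv with rfl | rfl | rfl | rfl
            · exact Or.inr (Or.inr (Or.inl rfl))
            · exact Or.inr (Or.inr (Or.inr ⟨dd, rfl, hdd1⟩))
            · exact Or.inr (Or.inl rfl)
            · exact Or.inl rfl
        choose SEnt hSEntlen hSEntchar using hentry
        choose SExi hSExilen hSExichar using hexit
        set walkF : (j : Fin m) → (bipGraph adjH).Walk (Sum.inr (Q, V)) (Sum.inr (Q', V')) :=
          fun j => (SEnt j).append ((Wmid j).append (SExi j)) with hwalkF
        have hlenF : ∀ j, (walkF j).length ≤ μ + 4 := by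
          intro j
          have hEq : (walkF j).length =
              (SEnt j).length + ((Wmid j).length + (SExi j).length) := by
            show ((SEnt j).append ((Wmid j).append (SExi j))).length = _
            rw [SimpleGraph.Walk.length_append, SimpleGraph.Walk.length_append]
          have h1 := hSEntlen j
          have h3 := hSExilen j
          have h2' := hWlen j
          omega
        have hnodeE : ∀ (i u : Fin m) (y : ν0), i ≠ u → (y, L i y) = E u → False := by
          intro i u y hiu heq
          have h1 : (E u).1 = y := by rw [← heq]
          have h2' : L u y = (E u).2 := by have := hLEforce u; rw [h1] at this; exact this
          have h3 : L i y = (E u).2 := by rw [← heq]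
          exact hiu (hLinj y i u (h3.trans h2'.symm))
        have hnodeX : ∀ (i u : Fin m) (y : ν0), i ≠ u → (y, L i y) = X' u → False := by
          intro i u y hiu heq
          have h1 : (X' u).1 = y := by rw [← heq]
          have h2' : L u y = (X' u).2 := by have := hLXforce u; rw [h1] at this; exact this
          have h3 : L i y = (X' u).2 := by rw [← heq]
          exact hiu (hLinj y i u (h3.trans h2'.symm))
        have hclass : ∀ i v, v ∈ (walkF i).support → v ≠ Sum.inr (Q, V) →
            v ≠ Sum.inr (Q', V') →
            v = Sum.inl (E i) ∨ v = Sum.inl (X' i) ∨ (∃ y, v = Sum.inl (y, L i y)) ∨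
            (∃ dd, v = Sum.inr (Q, dd) ∧ adjH (p1, L i p1) (Q, dd)) ∨
            (∃ dd, v = Sum.inr (Q', dd) ∧ adjH (p2, L i p2) (Q', dd)) ∨
            (∃ A' d', A' ∈ c.map Prod.fst ∧ v = Sum.inr (A', d') ∧ v ∈ (Wmid i).support) := by
          intro i v hv hv1 hv2
          have hv' : v ∈ ((SEnt i).append ((Wmid i).append (SExi i))).support := hv
          rw [SimpleGraph.Walk.mem_support_append_iff] at hv'
          rcases hv' with hv' | hv'
          · rcases hSEntchar i v hv' with hcase | hcase | hcase | hcase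
            · exact absurd hcase hv1
            · exact Or.inl hcase
            · exact Or.inr (Or.inr (Or.inl ⟨p1, hcase⟩))
            · exact Or.inr (Or.inr (Or.inr (Or.inl hcase)))
          · rw [SimpleGraph.Walk.mem_support_append_iff] at hv'
            rcases hv' with hv' | hv'
            · rcases hWchar i v hv' with ⟨y, -, hcase⟩ | ⟨A', d', hA', hcase⟩
              · exact Or.inr (Or.inr (Or.inl ⟨y, hcase⟩))
              · exact Or.inr (Or.inr (Or.inr (Or.inr (Or.inr ⟨A', d', hA', hcase, hv'⟩))))
            · rcases hSExichar i v hv' with hcase | hcase | hcase | hcase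
              · exact absurd hcase hv2
              · exact Or.inr (Or.inl hcase)
              · exact Or.inr (Or.inr (Or.inl ⟨p2, hcase⟩))
              · exact Or.inr (Or.inr (Or.inr (Or.inr (Or.inl hcase))))
        refine ⟨fun j => (walkF j).bypass, ?_, ?_, ?_⟩
        · intro i
          exact ⟨SimpleGraph.Walk.bypass_isPath _,
            le_trans (SimpleGraph.Walk.length_bypass_le _) (hlenF i)⟩
        · intro i j v _ hvj
          exact hvj
        · intro i u v hvall hvi hvu
          by_contra hiu
          have hvQV : v ≠ Sum.inr (Q, V) := (hvall i).1
          have hvQ'V' : v ≠ Sum.inr (Q', V') := (hvall i).2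
          have hvi' := SimpleGraph.Walk.support_bypass_subset _ hvi
          have hvu' := SimpleGraph.Walk.support_bypass_subset _ hvu
          rcases hclass i v hvi' hvQV hvQ'V' with
              hf | hf | ⟨y1, hf⟩ | ⟨d1, hf, hfa⟩ | ⟨d1, hf, hfa⟩ | ⟨A1, d1, hA1, hf, hfm⟩ <;>
            rcases hclass u v hvu' hvQV hvQ'V' with
              hg | hg | ⟨y2, hg⟩ | ⟨d2, hg, hga⟩ | ⟨d2, hg, hga⟩ | ⟨A2, d2, hA2, hg, hgm⟩
          · exact hiu (hEinj (by simpa using hf.symm.trans hg))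
          · exact P1 i u hiu (by simpa using hf.symm.trans hg)
          · exact hnodeE u i y2 (Ne.symm hiu) (by simpa using hg.symm.trans hf)
          · exact absurd (hf.symm.trans hg) (by simp)
          · exact absurd (hf.symm.trans hg) (by simp)
          · exact absurd (hf.symm.trans hg) (by simp)
          · exact P1 u i (Ne.symm hiu) (by simpa using hg.symm.trans hf)
          · exact hiu (hX'inj (by simpa using hf.symm.trans hg))
          · exact hnodeX u i y2 (Ne.symm hiu) (by simpa using hg.symm.trans hf)
          · exact absurd (hf.symm.trans hg) (by simp)
          · exact absurd (hf.symm.trans hg) (by simp)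
          · exact absurd (hf.symm.trans hg) (by simp)
          · exact hnodeE i u y1 hiu (by simpa using hf.symm.trans hg)
          · exact hnodeX i u y1 hiu (by simpa using hf.symm.trans hg)
          · obtain ⟨h1, h2'⟩ : y1 = y2 ∧ L i y1 = L u y2 := by simpa using hf.symm.trans hg
            subst h1
            exact hiu (hLinj y1 i u h2')
          · exact absurd (hf.symm.trans hg) (by simp)
          · exact absurd (hf.symm.trans hg) (by simp)
          · exact absurd (hf.symm.trans hg) (by simp)
          · exact absurd (hf.symm.trans hg) (by simp)
          · exact absurd (hf.symm.trans hg) (by simp)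
          · exact absurd (hf.symm.trans hg) (by simp)
          · have hd12 : d1 = d2 := by simpa using hf.symm.trans hg
            exact hiu (hLinj p1 i u (h2.H1 hfa (hd12 ▸ hga)))
          · obtain ⟨hQ, -⟩ : Q = Q' ∧ d1 = d2 := by simpa using hf.symm.trans hg
            exact hQQ hQ
          · obtain ⟨hQA, -⟩ : Q = A2 ∧ d1 = d2 := by simpa using hf.symm.trans hg
            exact hQnotinA (hQA ▸ hA2)
          · exact absurd (hf.symm.trans hg) (by simp)
          · exact absurd (hf.symm.trans hg) (by simp)
          · exact absurd (hf.symm.trans hg) (by simp)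
          · obtain ⟨hQ, -⟩ : Q' = Q ∧ d1 = d2 := by simpa using hf.symm.trans hg
            exact hQQ hQ.symm
          · have hd12 : d1 = d2 := by simpa using hf.symm.trans hg
            exact hiu (hLinj p2 i u (h2.H1 hfa (hd12 ▸ hga)))
          · obtain ⟨hQA, -⟩ : Q' = A2 ∧ d1 = d2 := by simpa using hf.symm.trans hg
            exact hQ'notinA (hQA ▸ hA2)
          · exact absurd (hf.symm.trans hg) (by simp)
          · exact absurd (hf.symm.trans hg) (by simp)
          · exact absurd (hf.symm.trans hg) (by simp)
          · obtain ⟨hQA, -⟩ : A1 = Q ∧ d1 = d2 := by simpa using hf.symm.trans hg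
            exact hQnotinA (hQA ▸ hA1)
          · obtain ⟨hQA, -⟩ : A1 = Q' ∧ d1 = d2 := by simpa using hf.symm.trans hg
            exact hQ'notinA (hQA ▸ hA1)
          · exact hWdisj i u v hiu hfm hgm

      · -- ULTRA BRANCH
        set y0 := (E j0).1 with hy0
        set s0 := (E j0).2 with hs0
        set s0' := (X u0).2 with hs0'
        have hss : s0 ≠ s0' := by
          intro he
          exact hnomatch u0 (Prod.ext hcc he)
        have hXu0 : X u0 = (y0, s0') := Prod.ext hcc.symm rfl
        have hyQ' : adj0 y0 Q' := by
          have := hXQ' u0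
          rwa [hcc]
        -- a second neighbour of Q'
        have hnt : Nontrivial {x : ν0 // adj0 x Q'} := by
          rw [← Fintype.one_lt_card_iff_nontrivial, hcardQ']; omega
        obtain ⟨z1, z2, hz12⟩ := hnt.exists_pair_ne
        have hzpick : ∃ zz : {x : ν0 // adj0 x Q'}, zz.1 ≠ y0 := by
          by_cases h1 : z1.1 = y0
          · refine ⟨z2, fun h2' => hz12 (Subtype.ext ?_)⟩
            rw [h1, h2']
          · exact ⟨z1, h1⟩
        obtain ⟨zz, hzz⟩ := hzpick
        set z0 := zz.1 with hz0def
        have hz0Q' : adj0 z0 Q' := zz.2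
        obtain ⟨lvlz, hlvlz⟩ := h2.HNbr Q' V' hz0Q'
        obtain ⟨c0, hc0⟩ : ∃ c0 : Fin k, c0 ≠ lvlz := by
          refine ⟨⟨(lvlz.val + 1) % k, Nat.mod_lt _ (by omega)⟩, fun he => ?_⟩
          have hv := congrArg Fin.val he
          simp only at hv
          rcases Nat.lt_or_ge (lvlz.val + 1) k with hlt | hge
          · rw [Nat.mod_eq_of_lt hlt] at hv; omega
          · have hlt2 := lvlz.isLt
            have : lvlz.val + 1 = k := by omega
            rw [this, Nat.mod_self] at hv
            omega
        obtain ⟨d1, hB'1, hB'2⟩ := h2.HGen s0 c0 hyQ' hz0Q' (Ne.symm hzz)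
        obtain ⟨d2, hB''1, hB''2⟩ := h2.HGen c0 s0' hz0Q' hyQ' hzz
        -- the special walk
        have e1 : (bipGraph adjH).Adj (Sum.inr (Q, V)) (Sum.inl (E j0)) :=
          bip_adj_inr_inl.mpr (hEadj j0)
        have e2 : (bipGraph adjH).Adj (Sum.inl (E j0)) (Sum.inr (Q', d1)) :=
          bip_adj_inl_inr.mpr hB'1
        have e3 : (bipGraph adjH).Adj (Sum.inr (Q', d1)) (Sum.inl (z0, c0)) :=
          bip_adj_inr_inl.mpr hB'2
        have e4 : (bipGraph adjH).Adj (Sum.inl (z0, c0)) (Sum.inr (Q', d2)) :=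
          bip_adj_inl_inr.mpr hB''1
        have e5 : (bipGraph adjH).Adj (Sum.inr (Q', d2)) (Sum.inl (X u0)) := by
          rw [hXu0]; exact bip_adj_inr_inl.mpr hB''2
        have e6 : (bipGraph adjH).Adj (Sum.inl (X u0)) (Sum.inr (Q', V')) :=
          bip_adj_inl_inr.mpr (hXadj u0)
        set Wspec : (bipGraph adjH).Walk (Sum.inr (Q, V)) (Sum.inr (Q', V')) :=
          .cons e1 (.cons e2 (.cons e3 (.cons e4 (.cons e5 (.cons e6 .nil))))) with hWspec
        -- the short walks
        have hshort : ∀ i : Fin m, i ≠ j0 →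
            ∃ Ws : (bipGraph adjH).Walk (Sum.inr (Q, V)) (Sum.inr (Q', V')),
              Ws.length = 2 ∧ Ws.support = [Sum.inr (Q, V), Sum.inl (E i), Sum.inr (Q', V')] := by
          intro i hi
          obtain ⟨ui, hui, hEXi⟩ := hmatched i hi
          have f1 : (bipGraph adjH).Adj (Sum.inr (Q, V)) (Sum.inl (E i)) :=
            bip_adj_inr_inl.mpr (hEadj i)
          have f2 : (bipGraph adjH).Adj (Sum.inl (E i)) (Sum.inr (Q', V')) := by
            rw [hEXi]; exact bip_adj_inl_inr.mpr (hXadj ui)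
          exact ⟨.cons f1 (.cons f2 .nil), rfl, by simp⟩
        choose Wsh hWshlen hWshsupp using fun i : {i : Fin m // i ≠ j0} => hshort i.1 i.2
        set walkF : (i : Fin m) → (bipGraph adjH).Walk (Sum.inr (Q, V)) (Sum.inr (Q', V')) :=
          fun i => if hij : i = j0 then Wspec else Wsh ⟨i, hij⟩ with hwalkF
        have hsupp : ∀ i : Fin m, (walkF i).support ⊆
            [Sum.inr (Q, V), Sum.inl (E i), Sum.inr (Q', d1), Sum.inl (z0, c0),
             Sum.inr (Q', d2), Sum.inl (X u0), Sum.inr (Q', V')] := by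
          intro i
          by_cases hij : i = j0
          · subst hij
            rw [hwalkF]
            simp only [dif_pos]
            intro v hv
            simp only [hWspec, SimpleGraph.Walk.support_cons, SimpleGraph.Walk.support_nil] at hv
            simpa using hv
          · rw [hwalkF]
            simp only [dif_neg hij]
            rw [hWshsupp ⟨i, hij⟩]
            intro v hv
            simp only [List.mem_cons, List.mem_singleton] at hv ⊢
            tauto
        have hlenF : ∀ i, (walkF i).length ≤ 6 := by
          intro i
          by_cases hij : i = j0
          · subst hij; rw [hwalkF]; simp only [dif_pos]; rw [hWspec]; simp
          · rw [hwalkF]; simp only [dif_neg hij]; rw [hWshlen ⟨i, hij⟩]; omega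
        refine ⟨fun i => (walkF i).bypass, ?_, ?_, ?_⟩
        · intro i
          refine ⟨SimpleGraph.Walk.bypass_isPath _, ?_⟩
          calc (walkF i).bypass.length ≤ (walkF i).length := SimpleGraph.Walk.length_bypass_le _
            _ ≤ 6 := hlenF i
            _ ≤ μ + 4 := by omega
        · intro i j v _ hvj
          exact hvj
        · intro i u v hvall hvi hvu
          by_contra hiu
          have hvQV : v ≠ Sum.inr (Q, V) := (hvall i).1
          have hvQ'V' : v ≠ Sum.inr (Q', V') := (hvall i).2
          have hvi' := SimpleGraph.Walk.support_bypass_subset _ hvi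
          have hvu' := SimpleGraph.Walk.support_bypass_subset _ hvu
          have hvi2 := hsupp i hvi'
          have hvu2 := hsupp u hvu'
          simp only [List.mem_cons, List.mem_singleton, List.not_mem_nil, or_false] at hvi2 hvu2
          -- analyse which walk is special
          have hkey : ∀ w : Fin m, w ≠ j0 → v ∈ (walkF w).support → v = Sum.inl (E w) := by
            intro w hw hvw
            have := hsupp w hvw
            simp only [List.mem_cons, List.mem_singleton] at this
            have hsuppw : (walkF w).support = [Sum.inr (Q, V), Sum.inl (E w), Sum.inr (Q', V')] := by
              rw [hwalkF]; simp only [dif_neg hw]; exact hWshsupp ⟨w, hw⟩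
            rw [hsuppw] at hvw
            simp only [List.mem_cons, List.mem_singleton, List.not_mem_nil, or_false] at hvw
            rcases hvw with h | h | h
            · exact absurd h hvQV
            · exact h
            · exact absurd h hvQ'V'
          -- the clash of the special walk's interior with a short walk's interior
          have hclash : ∀ w : Fin m, w ≠ j0 → v = Sum.inl (E w) → False := by
            intro w hw hvw
            have hvspec : v ∈ (walkF j0).support := by
              by_cases hij : i = j0
              · exact hij ▸ hvi'
              · have hju : u = j0 := by
                  have hvi3 := hkey i hij hvi'
                  by_contra hju
                  have hvu3 := hkey u hju hvu'
                  rw [hvi3] at hvu3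
                  exact hiu (hEinj (by simpa using hvu3))
                exact hju ▸ hvu'
            have := hsupp j0 hvspec
            simp only [List.mem_cons, List.mem_singleton, List.not_mem_nil, or_false] at this
            obtain ⟨uw, huw, hEXw⟩ := hmatched w hw
            rcases this with h | h | h | h | h | h | h
            · exact hvQV h
            · -- E w = E j0
              rw [hvw] at h
              have : E w = E j0 := by simpa using h
              exact hw (hEinj this)
            · rw [hvw] at h; simp at h
            · -- E w = (z0, c0)
              rw [hvw] at h
              have hEwz : E w = (z0, c0) := by simpa using h
              have hadjc0 : adjH (z0, c0) (Q', V') := by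
                rw [← hEwz, hEXw]; exact hXadj uw
              exact hc0 (h2.H1 hadjc0 hlvlz)
            · rw [hvw] at h; simp at h
            · -- E w = X u0
              rw [hvw] at h
              have : E w = X u0 := by simpa using h
              rw [hEXw] at this
              exact huw (hXinj this)
            · exact hvQ'V' h
          by_cases hij : i = j0
          · have hju : u ≠ j0 := fun h => hiu (hij.trans h.symm)
            exact hclash u hju (hkey u hju hvu')
          · exact hclash i hij (hkey i hij hvi')
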